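/- Let N ≥ 3 and ε > 0 small. There is a constant C > 0, independent of ε, such that for all x, y ∈ Ω_ε one has |H_ε(x,y) − H(x,y) − H_{ε,1}(x,y)| ≤ C ε^{N−2} (|x|^{2−N} + |y|^{2−N}). -/

import Mathlib

open MeasureTheory Metric Set Filter
open scoped ENNReal

noncomputable section

/-- Second derivative of `f` at `x` in directions `v`, `w`. -/
def D2 {N : ℕ} (f : EuclideanSpace ℝ (Fin N) → ℝ) (x v w : EuclideanSpace ℝ (Fin N)) : ℝ :=
  fderiv ℝ (fun y => fderiv ℝ f y v) x w

/-- The Laplacian of `f : ℝ^N → ℝ`. -/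
def lap {N : ℕ} (f : EuclideanSpace ℝ (Fin N) → ℝ) (x : EuclideanSpace ℝ (Fin N)) : ℝ :=
  ∑ i : Fin N, D2 f x (EuclideanSpace.single i 1) (EuclideanSpace.single i 1)

/-- `γ_N = [(N−2)|S^{N−1}|]⁻¹`, where `|S^{N-1}| = N·vol(B(0,1))` is the surface measure of
the unit sphere. -/
def gammaN (N : ℕ) : ℝ :=
  (((N : ℝ) - 2) * (N * (volume (ball (0 : EuclideanSpace ℝ (Fin N)) 1)).toReal))⁻¹

/-- The defining property of the regular part `H_D` of the Green's function of `−Δ` in a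
domain `D`: for each `y ∈ D`, `x ↦ H_D(x,y)` is harmonic in `D`, continuous up to the
boundary, and equals `γ_N|x−y|^{2−N}` on `∂D`. -/
def IsRegularPart (N : ℕ) (D : Set (EuclideanSpace ℝ (Fin N)))
    (H : EuclideanSpace ℝ (Fin N) → EuclideanSpace ℝ (Fin N) → ℝ) : Prop :=
  ∀ y ∈ D, ContinuousOn (fun x => H x y) (closure D) ∧
    ContDiffOn ℝ 2 (fun x => H x y) D ∧
    (∀ x ∈ D, lap (fun z => H z y) x = 0) ∧
    (∀ x ∈ frontier D, H x y = gammaN N * ‖x - y‖ ^ ((2 : ℝ) - N))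

open scoped RealInnerProductSpace

abbrev EN (N : ℕ) := EuclideanSpace ℝ (Fin N)

/-- Auxiliary notion of harmonicity packaged with explicit derivative data. -/
def HarmOn (N : ℕ) (u : EN N → ℝ) (U : Set (EN N)) : Prop :=
  ∀ x ∈ U, ∃ F : EN N → (EN N →L[ℝ] ℝ), (∀ᶠ y in nhds x, HasFDerivAt u (F y) y) ∧
    ∃ d : Fin N → ℝ,
      (∀ i : Fin N, HasDerivAt
        (fun t : ℝ => F (x + t • EuclideanSpace.single i 1) (EuclideanSpace.single i 1)) (d i) 0) ∧
      ∑ i, d i = 0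

theorem HarmOn.mono {N : ℕ} {u : EN N → ℝ} {U V : Set (EN N)} (h : HarmOn N u U) (hVU : V ⊆ U) :
    HarmOn N u V := fun x hx => h x (hVU hx)

theorem HarmOn.add {N : ℕ} {u v : EN N → ℝ} {U : Set (EN N)} (hu : HarmOn N u U)
    (hv : HarmOn N v U) : HarmOn N (fun x => u x + v x) U := by
  intro x hx
  obtain ⟨F, hF, d, hd, hds⟩ := hu x hx
  obtain ⟨G, hG, e, he, hes⟩ := hv x hx
  refine ⟨fun y => F y + G y, ?_, fun i => d i + e i, fun i => ?_, by rw [Finset.sum_add_distrib, hds, hes, add_zero]⟩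
  · filter_upwards [hF, hG] with y h1 h2 using h1.add h2
  · exact (hd i).add (he i)

theorem HarmOn.const_mul {N : ℕ} {u : EN N → ℝ} {U : Set (EN N)} (hu : HarmOn N u U) (a : ℝ) :
    HarmOn N (fun x => a * u x) U := by
  intro x hx
  obtain ⟨F, hF, d, hd, hds⟩ := hu x hx
  refine ⟨fun y => a • F y, ?_, fun i => a * d i, fun i => ?_, by rw [← Finset.mul_sum, hds, mul_zero]⟩
  · filter_upwards [hF] with y h1 using h1.const_smul a
  · simpa using (hd i).const_mul a

theorem harmOn_const {N : ℕ} {U : Set (EN N)} (a : ℝ) : HarmOn N (fun _ => a) U := by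
  intro x _
  refine ⟨fun _ => 0, Filter.Eventually.of_forall (fun y => hasFDerivAt_const a y), fun _ => 0,
    fun i => by simpa using hasDerivAt_const (0:ℝ) (0:ℝ), by simp⟩

theorem HarmOn.neg {N : ℕ} {u : EN N → ℝ} {U : Set (EN N)} (hu : HarmOn N u U) :
    HarmOn N (fun x => -u x) U := by
  have := hu.const_mul (-1); simpa using this

theorem HarmOn.sub {N : ℕ} {u v : EN N → ℝ} {U : Set (EN N)} (hu : HarmOn N u U)
    (hv : HarmOn N v U) : HarmOn N (fun x => u x - v x) U := by
  have := hu.add hv.neg; simpa [sub_eq_add_neg] using this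

/-- Bridge from the `lap`-based notion to `HarmOn`. -/
theorem harmOn_of_lap {N : ℕ} {u : EuclideanSpace ℝ (Fin N) → ℝ} {U : Set (EuclideanSpace ℝ (Fin N))}
    (hU : IsOpen U) (h2 : ContDiffOn ℝ 2 u U) (hlap : ∀ x ∈ U, lap u x = 0) :
    HarmOn N u U := by
  intro x hx
  refine ⟨fderiv ℝ u, ?_, fun i => D2 u x (EuclideanSpace.single i 1) (EuclideanSpace.single i 1),
    fun i => ?_, hlap x hx⟩
  · filter_upwards [hU.mem_nhds hx] with y hy
    exact ((h2.contDiffAt (hU.mem_nhds hy)).differentiableAt (by norm_num)).hasFDerivAt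
  · have h2x : ContDiffAt ℝ 2 u x := h2.contDiffAt (hU.mem_nhds hx)
    have h1 : ContDiffAt ℝ 1 (fderiv ℝ u) x := h2x.fderiv_right (le_refl 2)
    have hφ : DifferentiableAt ℝ (fun y => fderiv ℝ u y (EuclideanSpace.single i 1)) x :=
      (h1.clm_apply contDiffAt_const).differentiableAt one_ne_zero
    have hline : HasDerivAt (fun t : ℝ => x + t • (EuclideanSpace.single i 1 : EN N))
        (EuclideanSpace.single i 1) 0 := by
      simpa using ((hasDerivAt_id (0:ℝ)).smul_const
        (EuclideanSpace.single i 1 : EN N)).const_add x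
    have hx0 : x + (0:ℝ) • (EuclideanSpace.single i 1 : EN N) = x := by simp
    have hφ' : HasFDerivAt (fun y => fderiv ℝ u y (EuclideanSpace.single i 1))
        (fderiv ℝ (fun y => fderiv ℝ u y (EuclideanSpace.single i 1)) x)
        (x + (0:ℝ) • (EuclideanSpace.single i 1 : EN N)) := by
      rw [hx0]; exact hφ.hasFDerivAt
    have := hφ'.comp_hasDerivAt 0 hline
    exact this

/-- Second derivative test: at a local max, directional second derivatives are ≤ 0. -/
theorem snd_test {N : ℕ} {f : EN N → ℝ} {F : EN N → (EN N →L[ℝ] ℝ)} {z v : EN N} {c : ℝ}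
    (hmax : IsLocalMax f z) (hF : ∀ᶠ y in nhds z, HasFDerivAt f (F y) y)
    (hd : HasDerivAt (fun t : ℝ => F (z + t • v) v) c 0) : c ≤ 0 := by
  by_contra hc
  push_neg at hc
  set L : ℝ → EN N := fun t => z + t • v with hLdef
  have hL : ∀ t : ℝ, HasDerivAt L v t := fun t => by
    have h := ((hasDerivAt_id t).smul_const v).const_add z; rw [one_smul] at h; exact h
  have hL0 : L 0 = z := by simp [hLdef]
  have hLcont : Continuous L := by continuity
  set g₁ : ℝ → ℝ := fun t => F (L t) v with hg₁def
  -- eventually (f ∘ L) has derivative g₁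
  have hEv : ∀ᶠ t in nhds (0:ℝ), HasDerivAt (f ∘ L) (g₁ t) t := by
    have hpre : ∀ᶠ t in nhds (0:ℝ), HasFDerivAt f (F (L t)) (L t) :=
      (hLcont.continuousAt (x := (0:ℝ))).eventually
        (show ∀ᶠ y in nhds (L 0), HasFDerivAt f (F y) y by rw [hL0]; exact hF)
    filter_upwards [hpre] with t ht using ht.comp_hasDerivAt t (hL t)
  have hmax' : IsLocalMax (f ∘ L) 0 := by
    have h := (hLcont.continuousAt (x := (0:ℝ))).eventually
      (show ∀ᶠ y in nhds (L 0), f y ≤ f z by rw [hL0]; exact hmax)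
    have : ∀ᶠ t in nhds (0:ℝ), (f ∘ L) t ≤ (f ∘ L) 0 := by
      filter_upwards [h] with t ht
      simpa [Function.comp, hL0] using ht
    exact this
  -- g₁ 0 = 0
  have hg₁0 : g₁ 0 = 0 := by
    have h1 : HasDerivAt (f ∘ L) (g₁ 0) 0 := hEv.self_of_nhds
    have h2 := hmax'.deriv_eq_zero
    rw [← h1.deriv]; exact h2
  -- slope tends to c
  have hslope : Tendsto (fun t => g₁ t / t) (nhdsWithin 0 {(0:ℝ)}ᶜ) (nhds c) := by
    have := hasDerivAt_iff_tendsto_slope.mp hd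
    refine this.congr' ?_
    filter_upwards with t
    simp [slope, hg₁0, div_eq_inv_mul]
  have hposEv : ∀ᶠ t in nhdsWithin (0:ℝ) (Ioi 0), 0 < g₁ t := by
    have h1 : ∀ᶠ t in nhdsWithin 0 {(0:ℝ)}ᶜ, c / 2 < g₁ t / t :=
      hslope.eventually (eventually_gt_nhds (half_lt_self hc))
    have h2 : nhdsWithin (0:ℝ) (Ioi 0) ≤ nhdsWithin 0 {(0:ℝ)}ᶜ :=
      nhdsWithin_mono 0 (fun t ht => ne_of_gt ht)
    filter_upwards [h2 h1, self_mem_nhdsWithin] with t h ht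
    have ht' : (0:ℝ) < t := ht
    have : 0 < g₁ t / t := lt_trans (by positivity) h
    exact (div_pos_iff.mp this).resolve_right (fun h' => absurd ht' (not_lt.2 h'.2.le)) |>.1
  -- extract concrete radii
  obtain ⟨δ₁, hδ₁, h₁⟩ := Metric.eventually_nhds_iff.mp (hEv.and hmax')
  obtain ⟨δ₂, hδ₂, h₂⟩ := (mem_nhdsGT_iff_exists_Ioo_subset).mp hposEv
  have hδ₂' : (0:ℝ) < δ₂ := hδ₂
  set t₀ : ℝ := min δ₁ δ₂ / 2 with ht₀def
  have ht₀ : 0 < t₀ := by positivity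
  have ht₀₁ : t₀ < δ₁ := by
    calc t₀ ≤ δ₁ / 2 := by apply div_le_div_of_nonneg_right (min_le_left _ _) <;> norm_num
    _ < δ₁ := half_lt_self hδ₁
  have ht₀₂ : t₀ < δ₂ := by
    calc t₀ ≤ δ₂ / 2 := by apply div_le_div_of_nonneg_right (min_le_right _ _) <;> norm_num
    _ < δ₂ := half_lt_self hδ₂'
  have hder : ∀ t ∈ Icc (0:ℝ) t₀, HasDerivAt (f ∘ L) (g₁ t) t := by
    intro t ht
    refine (h₁ (y := t) ?_).1
    rw [Real.dist_eq, sub_zero, abs_of_nonneg ht.1]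
    exact lt_of_le_of_lt ht.2 ht₀₁
  have hcont : ContinuousOn (f ∘ L) (Icc 0 t₀) :=
    fun t ht => (hder t ht).continuousAt.continuousWithinAt
  have hmono : StrictMonoOn (f ∘ L) (Icc 0 t₀) := by
    refine strictMonoOn_of_deriv_pos (convex_Icc 0 t₀) hcont ?_
    intro t ht
    rw [interior_Icc] at ht
    rw [(hder t ⟨ht.1.le, ht.2.le⟩).deriv]
    exact h₂ ⟨ht.1, lt_trans ht.2 ht₀₂⟩
  have hlt : (f ∘ L) 0 < (f ∘ L) t₀ :=
    hmono ⟨le_rfl, ht₀.le⟩ ⟨ht₀.le, le_rfl⟩ ht₀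
  have hle : (f ∘ L) t₀ ≤ (f ∘ L) 0 := by
    refine (h₁ (y := t₀) ?_).2
    rw [Real.dist_eq, sub_zero, abs_of_nonneg ht₀.le]
    exact ht₀₁
  linarith

theorem inner_single_self {N : ℕ} (i : Fin N) :
    ⟪(EuclideanSpace.single i 1 : EN N), EuclideanSpace.single i 1⟫ = 1 := by
  rw [real_inner_self_eq_norm_sq, EuclideanSpace.norm_single]; norm_num

/-- The maximum principle. -/
theorem maxp {N : ℕ} (hN : 0 < N) {U : Set (EN N)} (hU : IsOpen U)
    (hb : Bornology.IsBounded U) {u : EN N → ℝ} (hc : ContinuousOn u (closure U))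
    (hh : HarmOn N u U) (hfr : ∀ z ∈ frontier U, u z ≤ 0) : ∀ x ∈ U, u x ≤ 0 := by
  intro x hx
  obtain ⟨r, hr⟩ := hb.subset_closedBall 0
  set B : ℝ := max (r ^ 2) 0 with hBdef
  have hB : ∀ z ∈ closure U, ⟪z, z⟫ ≤ B := by
    intro z hz
    have hz' : z ∈ closedBall (0 : EN N) r := closure_minimal hr isClosed_closedBall hz
    have : ‖z‖ ≤ r := by simpa using mem_closedBall_zero_iff.mp hz'
    rw [real_inner_self_eq_norm_sq]
    exact le_max_of_le_left (by nlinarith [norm_nonneg z])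
  have hBnn : (0 : ℝ) ≤ B := le_max_right _ _
  have key : ∀ δ : ℝ, 0 < δ → u x ≤ δ * B := by
    intro δ hδ
    set v : EN N → ℝ := fun z => u z + δ * ⟪z, z⟫ with hvdef
    have hvc : ContinuousOn v (closure U) :=
      hc.add (continuous_const.mul (continuous_id.inner continuous_id)).continuousOn
    have hcompact : IsCompact (closure U) := hb.isCompact_closure
    have hne : (closure U).Nonempty := ⟨x, subset_closure hx⟩
    obtain ⟨z₀, hz₀m, hz₀⟩ := hcompact.exists_isMaxOn hne hvc
    by_cases hz₀U : z₀ ∈ U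
    · exfalso
      obtain ⟨F, hF, d, hd, hds⟩ := hh z₀ hz₀U
      have hlocal : IsLocalMax v z₀ := by
        filter_upwards [hU.mem_nhds hz₀U] with y hy using hz₀ (subset_closure hy)
      have hFv : ∀ᶠ y in nhds z₀, HasFDerivAt v (F y + (2 * δ) • (innerSL ℝ y)) y := by
        filter_upwards [hF] with y hy
        refine hy.add ?_
        have h1 := ((hasFDerivAt_id y).inner ℝ (hasFDerivAt_id y)).const_mul δ
        refine h1.congr_fderiv ?_
        ext w
        simp [fderivInnerCLM_apply, real_inner_comm]
        ring
      have hterm : ∀ i : Fin N, d i + 2 * δ ≤ 0 := by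
        intro i
        refine snd_test (v := EuclideanSpace.single i 1) hlocal hFv ?_
        have hlin : HasDerivAt
            (fun t : ℝ => (2 * δ) * (⟪z₀, (EuclideanSpace.single i 1 : EN N)⟫ + t))
            (2 * δ) 0 := by
          simpa using ((hasDerivAt_id (0:ℝ)).const_add
            ⟪z₀, (EuclideanSpace.single i 1 : EN N)⟫).const_mul (2 * δ)
        have := (hd i).add hlin
        refine this.congr_of_eventuallyEq ?_
        filter_upwards with t
        simp [ContinuousLinearMap.add_apply, innerSL_apply_apply, inner_add_left,
          real_inner_smul_left, inner_single_self]
        ring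
      have hsum : ∑ i : Fin N, (d i + 2 * δ) = 2 * δ * N := by
        rw [Finset.sum_add_distrib, hds, Finset.sum_const, Finset.card_univ]
        simp [mul_comm]
      have h1 : (0:ℝ) < 2 * δ * N := by positivity
      have h2 : ∑ i : Fin N, (d i + 2 * δ) ≤ 0 :=
        Finset.sum_nonpos (fun i _ => hterm i)
      rw [hsum] at h2; linarith
    · have hzfr : z₀ ∈ frontier U := by
        rw [hU.frontier_eq]; exact ⟨hz₀m, hz₀U⟩
      have h1 : v x ≤ v z₀ := hz₀ (subset_closure hx)
      have h2 : u z₀ + δ * ⟪z₀, z₀⟫ ≤ 0 + δ * B := by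
        have := hfr z₀ hzfr
        have := hB z₀ hz₀m
        nlinarith
      have h3 : (0:ℝ) ≤ ⟪x, x⟫ := real_inner_self_nonneg
      simp only [hvdef] at h1
      nlinarith
  by_contra hpos
  push_neg at hpos
  have hk := key (u x / (2 * (B + 1))) (by positivity)
  have hhalf : u x / (2 * (B + 1)) * B ≤ u x / 2 := by
    rw [div_mul_eq_mul_div, div_le_div_iff₀ (by positivity) two_pos]
    nlinarith
  linarith

theorem rad_eq {N : ℕ} (z : EN N) : (⟪z, z⟫) ^ (((2:ℝ) - N)/2) = ‖z‖ ^ ((2:ℝ) - N) := by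
  rw [real_inner_self_eq_norm_sq, ← Real.rpow_natCast ‖z‖ 2, ← Real.rpow_mul (norm_nonneg z)]
  congr 1
  push_cast
  ring

theorem sum_inner_single_sq {N : ℕ} (z : EN N) :
    ∑ i : Fin N, ⟪z, (EuclideanSpace.single i 1 : EN N)⟫ * ⟪z, (EuclideanSpace.single i 1 : EN N)⟫
      = ⟪z, z⟫ := by
  have h : ∀ i : Fin N, ⟪z, (EuclideanSpace.single i 1 : EN N)⟫ = z i := by
    intro i
    rw [real_inner_comm, EuclideanSpace.inner_single_left]
    simp
  simp_rw [h]
  rw [PiLp.inner_apply]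
  simp [RCLike.inner_apply, sq]

theorem cont_radial {N : ℕ} (c : EN N) (β : ℝ) :
    ContinuousOn (fun x : EN N => ‖x - c‖ ^ β) {x | x ≠ c} := by
  intro x hx
  have h1 : ContinuousAt (fun x : EN N => ‖x - c‖) x :=
    (continuous_norm.comp (continuous_id.sub continuous_const)).continuousAt
  have h2 : ‖x - c‖ ≠ 0 := by
    simp only [ne_eq, norm_eq_zero, sub_eq_zero]
    exact hx
  exact (h1.rpow_const (Or.inl h2)).continuousWithinAt

theorem harm_radial {N : ℕ} (c : EN N) :
    HarmOn N (fun x : EN N => ‖x - c‖ ^ ((2:ℝ) - N)) {x : EN N | x ≠ c} := by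
  intro x hx
  have hx' : x ≠ c := hx
  set α : ℝ := ((2:ℝ) - N)/2 with hαdef
  set q : EN N → ℝ := fun z => ⟪z - c, z - c⟫ with hqdef
  set Q : EN N → (EN N →L[ℝ] ℝ) := fun z =>
    (fderivInnerCLM ℝ (z - c, z - c)).comp
      ((ContinuousLinearMap.id ℝ (EN N)).prod (ContinuousLinearMap.id ℝ (EN N))) with hQdef
  have hq : ∀ z : EN N, HasFDerivAt q (Q z) z := by
    intro z
    exact ((hasFDerivAt_id z).sub_const c).inner ℝ ((hasFDerivAt_id z).sub_const c)
  have hQapp : ∀ z w : EN N, Q z w = 2 * ⟪z - c, w⟫ := by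
    intro z w
    simp [hQdef, fderivInnerCLM_apply, real_inner_comm]
    ring
  have hbigeq : (fun z : EN N => ‖z - c‖ ^ ((2:ℝ) - N)) = fun z => (q z) ^ α :=
    funext (fun z => (rad_eq (z - c)).symm)
  rw [hbigeq]
  have hqpos : ∀ z : EN N, z ≠ c → 0 < q z := by
    intro z hz
    have h1 : q z = ‖z - c‖ ^ 2 := real_inner_self_eq_norm_sq _
    rw [h1]
    exact pow_pos (norm_sub_pos_iff.mpr hz) 2
  set s : ℝ := q x with hsdef
  have hs : 0 < s := hqpos x hx'
  -- the gradient field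
  set F : EN N → (EN N →L[ℝ] ℝ) := fun y => (α * (q y) ^ (α - 1)) • Q y with hFdef
  refine ⟨F, ?_, ?_⟩
  · have hopen : IsOpen {z : EN N | z ≠ c} := isOpen_compl_singleton
    filter_upwards [hopen.mem_nhds hx'] with y hy
    have hqy : q y ≠ 0 := ne_of_gt (hqpos y hy)
    have hφ : HasDerivAt (fun t : ℝ => t ^ α) (α * (q y) ^ (α - 1)) (q y) := by
      simpa [mul_comm] using Real.hasDerivAt_rpow_const (x := q y) (p := α) (Or.inl hqy)
    exact hφ.comp_hasFDerivAt y (hq y)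
  · -- directional second derivatives
    set e : Fin N → EN N := fun i => EuclideanSpace.single i 1 with hedef
    set d : Fin N → ℝ := fun i =>
      (α * (α - 1) * s ^ (α - 2) * (2 * ⟪x - c, e i⟫)) * (2 * ⟪x - c, e i⟫)
        + (α * s ^ (α - 1)) * 2 with hddef
    refine ⟨d, fun i => ?_, ?_⟩
    · -- derivative of t ↦ F (x + t • e i) (e i) at 0
      have hline : HasDerivAt (fun t : ℝ => x + t • e i) (e i) 0 := by
        simpa using ((hasDerivAt_id (0:ℝ)).smul_const (e i)).const_add x
      have hx0 : x + (0:ℝ) • e i = x := by simp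
      -- inner part: t ↦ q (x + t • e i)
      have hqx' : HasFDerivAt q (Q x) (x + (0:ℝ) • e i) := by rw [hx0]; exact hq x
      have hqline : HasDerivAt (fun t : ℝ => q (x + t • e i)) (2 * ⟪x - c, e i⟫) 0 := by
        have := hqx'.comp_hasDerivAt 0 hline
        rw [hQapp] at this; exact this
      -- A part
      have hφ2 : HasDerivAt (fun t : ℝ => t ^ (α - 1)) ((α - 1) * s ^ (α - 2)) s := by
        have h := Real.hasDerivAt_rpow_const (x := s) (p := α - 1) (Or.inl (ne_of_gt hs))
        have h12 : α - 1 - 1 = α - 2 := by ring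
        rw [h12] at h
        exact h
      have hφ2' : HasDerivAt (fun t : ℝ => t ^ (α - 1)) ((α - 1) * s ^ (α - 2))
          ((fun t : ℝ => q (x + t • e i)) 0) := by
        have h0 : (fun t : ℝ => q (x + t • e i)) 0 = s := by simp [hsdef, hx0]
        rw [h0]; exact hφ2
      have hA : HasDerivAt (fun t : ℝ => α * (q (x + t • e i)) ^ (α - 1))
          (α * ((α - 1) * s ^ (α - 2) * (2 * ⟪x - c, e i⟫))) 0 :=
        ((HasDerivAt.comp (h₂ := fun t : ℝ => t ^ (α - 1)) (0:ℝ) hφ2' hqline).const_mul α)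
      -- B part
      have hBfun : (fun t : ℝ => Q (x + t • e i) (e i)) =
          fun t : ℝ => 2 * ⟪x - c, e i⟫ + 2 * t := by
        funext t
        rw [hQapp]
        have : x + t • e i - c = (x - c) + t • e i := by abel
        rw [this, inner_add_left, real_inner_smul_left]
        have : ⟪e i, e i⟫ = 1 := inner_single_self i
        rw [this]
        ring
      have hB : HasDerivAt (fun t : ℝ => Q (x + t • e i) (e i)) 2 0 := by
        rw [hBfun]
        simpa using (((hasDerivAt_id (0:ℝ)).const_mul 2).const_add (2 * ⟪x - c, e i⟫))
      have hmul := hA.mul hB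
      have hB0 : Q (x + (0:ℝ) • e i) (e i) = 2 * ⟪x - c, e i⟫ := by
        rw [hx0, hQapp]
      have hA0 : α * (q (x + (0:ℝ) • e i)) ^ (α - 1) = α * s ^ (α - 1) := by
        rw [hx0]
      rw [hx0] at hmul
      have hQx : (Q x) (e i) = 2 * ⟪x - c, e i⟫ := hQapp x (e i)
      rw [hQx] at hmul
      refine HasDerivAt.congr_deriv (hmul.congr_of_eventuallyEq ?_) ?_
      · filter_upwards with t
        simp [hFdef, hedef]
      · show _ = d i
        rw [hddef]
        simp only [hsdef]
        ring
    · -- the sum vanishes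
      have hsum : ∑ i : Fin N, d i =
          (4 * α * (α - 1) * s ^ (α - 2)) * (∑ i : Fin N, ⟪x - c, e i⟫ * ⟪x - c, e i⟫)
            + (2 * α * s ^ (α - 1)) * N := by
        simp only [hddef]
        rw [Finset.sum_add_distrib, Finset.sum_const, Finset.card_univ, Fintype.card_fin,
          nsmul_eq_mul]
        have h1 : ∑ i : Fin N,
            (α * (α - 1) * s ^ (α - 2) * (2 * ⟪x - c, e i⟫)) * (2 * ⟪x - c, e i⟫)
            = (4 * α * (α - 1) * s ^ (α - 2)) * (∑ i : Fin N, ⟪x - c, e i⟫ * ⟪x - c, e i⟫) := by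
          rw [Finset.mul_sum]
          exact Finset.sum_congr rfl (fun j _ => by ring)
        rw [h1]
        ring
      rw [hsum, sum_inner_single_sq]
      have hpow : s ^ (α - 2) * s = s ^ (α - 1) := by
        nth_rewrite 2 [← Real.rpow_one s]
        rw [← Real.rpow_add hs]
        congr 1
        ring
      have hcoef : 4 * α * (α - 1) + 2 * α * N = 0 := by
        rw [hαdef]; field_simp; ring
      calc (4 * α * (α - 1) * s ^ (α - 2)) * (⟪x - c, x - c⟫)
            + (2 * α * s ^ (α - 1)) * N
          = (4 * α * (α - 1)) * (s ^ (α - 2) * s) + (2 * α * N) * s ^ (α - 1) := by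
            rw [hsdef]; ring
        _ = (4 * α * (α - 1) + 2 * α * N) * s ^ (α - 1) := by rw [hpow]; ring
        _ = 0 := by rw [hcoef, zero_mul]

theorem gammaN_pos {N : ℕ} (hN : 3 ≤ N) : 0 < gammaN N := by
  have h1 : (0:ℝ) < (N:ℝ) - 2 := by
    have : (3:ℝ) ≤ (N:ℝ) := by exact_mod_cast hN
    linarith
  have h2 : (0:ℝ) < (N:ℝ) := by positivity
  have h3 : (0:ℝ) < (volume (ball (0 : EuclideanSpace ℝ (Fin N)) 1)).toReal := by
    refine ENNReal.toReal_pos (ne_of_gt ?_) (ne_of_lt measure_ball_lt_top)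
    exact measure_ball_pos volume 0 one_pos
  rw [gammaN]
  positivity

theorem beta_nonpos {N : ℕ} (hN : 3 ≤ N) : (2:ℝ) - N ≤ 0 := by
  have : (3:ℝ) ≤ (N:ℝ) := by exact_mod_cast hN
  linarith

theorem rpow_beta_anti {N : ℕ} (hN : 3 ≤ N) {a b : ℝ} (ha : 0 < a) (hab : a ≤ b) :
    b ^ ((2:ℝ) - N) ≤ a ^ ((2:ℝ) - N) :=
  Real.rpow_le_rpow_of_nonpos ha hab (beta_nonpos hN)

theorem frontier_diff_subset {N : ℕ} (Ω : Set (EN N)) (p : EN N) {ε : ℝ} (hε : 0 < ε) :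
    frontier (Ω \ closedBall p ε) ⊆ (frontier Ω ∩ (ball p ε)ᶜ) ∪ sphere p ε := by
  have h0 : Ω \ closedBall p ε = Ω ∩ (closedBall p ε)ᶜ := rfl
  rw [h0]
  refine (frontier_inter_subset _ _).trans ?_
  rintro z (⟨h1, h2⟩ | ⟨_, h2⟩)
  · left
    refine ⟨h1, ?_⟩
    have : closure (closedBall p ε)ᶜ ⊆ (ball p ε)ᶜ :=
      closure_minimal (compl_subset_compl.2 ball_subset_closedBall) isOpen_ball.isClosed_compl
    exact this h2
  · right
    rw [frontier_compl, frontier_closedBall p (ne_of_gt hε)] at h2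
    exact h2

theorem closure_diff_subset {N : ℕ} (Ω : Set (EN N)) (p : EN N) (ε : ℝ) :
    closure (Ω \ closedBall p ε) ⊆ closure Ω ∩ (ball p ε)ᶜ := by
  refine closure_minimal ?_ (isClosed_closure.inter isOpen_ball.isClosed_compl)
  rintro z ⟨h1, h2⟩
  exact ⟨subset_closure h1, fun hb => h2 (ball_subset_closedBall hb)⟩

/-- Nonnegativity of the regular part. -/
theorem green_nonneg {N : ℕ} (hN : 3 ≤ N) {Ω : Set (EN N)} (hΩo : IsOpen Ω)
    (hΩb : Bornology.IsBounded Ω) {H : EN N → EN N → ℝ} (hH : IsRegularPart N Ω H) :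
    ∀ y ∈ Ω, ∀ x ∈ Ω, 0 ≤ H x y := by
  intro y hy x hx
  obtain ⟨hc, h2, hlap, hbd⟩ := hH y hy
  have hNpos : 0 < N := by omega
  have h := maxp hNpos hΩo hΩb (u := fun z => -(H z y)) (hc.neg) ?_ ?_ x hx
  · have h' : -(H x y) ≤ 0 := h
    linarith
  · exact (harmOn_of_lap hΩo h2 hlap).neg
  · intro z hz
    show -(H z y) ≤ 0
    rw [hbd z hz]
    have := gammaN_pos hN
    have := Real.rpow_nonneg (norm_nonneg (z - y)) ((2:ℝ) - N)
    nlinarith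

/-- The regular part is dominated by the fundamental solution. -/
theorem green_le {N : ℕ} (hN : 3 ≤ N) {Ω : Set (EN N)} (hΩo : IsOpen Ω)
    (hΩb : Bornology.IsBounded Ω) {H : EN N → EN N → ℝ} (hH : IsRegularPart N Ω H) :
    ∀ y ∈ Ω, ∀ x ∈ Ω, x ≠ y → H x y ≤ gammaN N * ‖x - y‖ ^ ((2:ℝ) - N) := by
  intro y hy x hx hxy
  obtain ⟨hc, h2, hlap, hbd⟩ := hH y hy
  have hNpos : 0 < N := by omega
  have hγ := gammaN_pos hN
  set γ := gammaN N with hγdef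
  -- a closed ball around y inside Ω
  obtain ⟨r₁, hr₁, hball⟩ := Metric.isOpen_iff.mp hΩo y hy
  set r₀ : ℝ := r₁ / 2 with hr₀def
  have hr₀ : 0 < r₀ := by positivity
  have hball₀ : closedBall y r₀ ⊆ Ω := by
    refine subset_trans ?_ hball
    intro z hz
    rw [mem_closedBall] at hz
    rw [mem_ball]
    calc dist z y ≤ r₁ / 2 := hz
      _ < r₁ := by linarith
  -- max of H(·,y) on that ball
  obtain ⟨zs, hzsm, hzs⟩ := (isCompact_closedBall y r₀).exists_isMaxOn
    ⟨y, mem_closedBall_self hr₀.le⟩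
    (hc.mono (hball₀.trans subset_closure))
  set K : ℝ := H zs y with hKdef
  -- choose the radius
  set ρ : ℝ := (max (K / γ) 1) ^ (1 / ((2:ℝ) - N)) with hρdef
  have hmaxpos : (0:ℝ) < max (K / γ) 1 := lt_of_lt_of_le one_pos (le_max_right _ _)
  have hρpos : 0 < ρ := Real.rpow_pos_of_pos hmaxpos _
  have hnxy : 0 < ‖x - y‖ := by
    rw [norm_pos_iff, sub_ne_zero]; exact hxy
  set r : ℝ := min ρ (min r₀ (‖x - y‖ / 2)) with hrdef
  have hr : 0 < r := lt_min hρpos (lt_min hr₀ (by positivity))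
  have hrρ : r ≤ ρ := min_le_left _ _
  have hrr₀ : r ≤ r₀ := (min_le_right _ _).trans (min_le_left _ _)
  have hrx : r < ‖x - y‖ := by
    have : r ≤ ‖x - y‖ / 2 := (min_le_right _ _).trans (min_le_right _ _)
    linarith
  have hbetane : ((2:ℝ) - N) ≠ 0 := by
    have := beta_nonpos hN
    have : (3:ℝ) ≤ (N:ℝ) := by exact_mod_cast hN
    intro h; linarith [this]
  have hkey : K ≤ γ * r ^ ((2:ℝ) - N) := by
    have h1 : ρ ^ ((2:ℝ) - N) ≤ r ^ ((2:ℝ) - N) :=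
      Real.rpow_le_rpow_of_nonpos hr hrρ (beta_nonpos hN)
    have h2 : ρ ^ ((2:ℝ) - N) = max (K / γ) 1 := by
      rw [hρdef, ← Real.rpow_mul hmaxpos.le, one_div, inv_mul_cancel₀ hbetane, Real.rpow_one]
    have h3 : K / γ ≤ ρ ^ ((2:ℝ) - N) := by rw [h2]; exact le_max_left _ _
    have h4 : K / γ ≤ r ^ ((2:ℝ) - N) := h3.trans h1
    calc K = γ * (K / γ) := by field_simp
      _ ≤ γ * r ^ ((2:ℝ) - N) := mul_le_mul_of_nonneg_left h4 hγ.le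
  -- apply the maximum principle on Ω minus the small ball
  set U : Set (EN N) := Ω \ closedBall y r with hUdef
  have hUopen : IsOpen U := hΩo.sdiff isClosed_closedBall
  have hUbdd : Bornology.IsBounded U := hΩb.subset diff_subset
  have hUx : x ∈ U := by
    refine ⟨hx, fun hmem => ?_⟩
    rw [mem_closedBall, dist_eq_norm] at hmem
    linarith
  have hUney : U ⊆ {z : EN N | z ≠ y} := by
    rintro z ⟨_, hz2⟩ rfl
    exact hz2 (mem_closedBall_self hr.le)
  have hclU : closure U ⊆ closure Ω ∩ (ball y r)ᶜ := closure_diff_subset Ω y r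
  have hclney : closure U ⊆ {z : EN N | z ≠ y} := by
    intro z hz
    have hz2 := (hclU hz).2
    intro hzy
    exact hz2 (by rw [hzy]; exact mem_ball_self hr)
  set u : EN N → ℝ := fun z => H z y - γ * ‖z - y‖ ^ ((2:ℝ) - N) with hudef
  have hcontu : ContinuousOn u (closure U) := by
    refine ContinuousOn.sub (hc.mono (fun z hz => (hclU hz).1)) ?_
    exact (continuousOn_const.mul (cont_radial y _)).mono hclney
  have hharmu : HarmOn N u U := by
    refine HarmOn.sub ((harmOn_of_lap hΩo h2 hlap).mono diff_subset) ?_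
    exact ((harm_radial y).const_mul γ).mono hUney
  have hfr : ∀ z ∈ frontier U, u z ≤ 0 := by
    intro z hz
    rcases frontier_diff_subset Ω y hr hz with ⟨hz1, _⟩ | hz2
    · show H z y - γ * ‖z - y‖ ^ ((2:ℝ) - N) ≤ 0
      rw [hbd z hz1]
      ring_nf
      exact le_refl 0
    · have hdist : dist z y = r := mem_sphere.mp hz2
      have hzball : z ∈ closedBall y r₀ := by
        rw [mem_closedBall, hdist]; exact hrr₀
      have hHle : H z y ≤ K := hzs hzball
      have hnorm : ‖z - y‖ = r := by rw [← dist_eq_norm]; exact hdist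
      show H z y - γ * ‖z - y‖ ^ ((2:ℝ) - N) ≤ 0
      rw [hnorm]
      linarith
  have hfin := maxp hNpos hUopen hUbdd hcontu hharmu hfr x hUx
  have : H x y - γ * ‖x - y‖ ^ ((2:ℝ) - N) ≤ 0 := hfin
  linarith

/-- Uniform bound for the regular part near the origin. -/
theorem green_near {N : ℕ} (hN : 3 ≤ N) {Ω : Set (EN N)} (hΩo : IsOpen Ω)
    (hΩb : Bornology.IsBounded Ω) {H : EN N → EN N → ℝ} (hH : IsRegularPart N Ω H)
    {R : ℝ} (hR : 0 < R) (hRsub : closedBall 0 R ⊆ Ω) :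
    ∀ y ∈ Ω, ∀ x ∈ Ω, ‖x‖ ≤ R / 2 →
      H x y ≤ gammaN N * (R/4) ^ ((2:ℝ) - N) + gammaN N * (R/8) ^ ((2:ℝ) - N) := by
  intro y hy x hx hxR
  have hNpos : 0 < N := by omega
  have hγ := gammaN_pos hN
  set γ := gammaN N with hγdef
  have hnn4 : 0 ≤ γ * (R/4) ^ ((2:ℝ) - N) := by positivity
  have hnn8 : 0 ≤ γ * (R/8) ^ ((2:ℝ) - N) := by positivity
  by_cases hcase : R / 4 ≤ ‖x - y‖
  · have hxy : x ≠ y := by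
      intro h; rw [h] at hcase; simp at hcase; linarith
    have h1 := green_le hN hΩo hΩb hH y hy x hx hxy
    have h2 : ‖x - y‖ ^ ((2:ℝ) - N) ≤ (R/4) ^ ((2:ℝ) - N) :=
      rpow_beta_anti hN (by positivity) hcase
    nlinarith
  · push_neg at hcase
    have hynorm : ‖y‖ < 3 * R / 4 := by
      calc ‖y‖ ≤ ‖x‖ + ‖y - x‖ := by
            have h := norm_add_le x (y - x); simpa using h
        _ = ‖x‖ + ‖x - y‖ := by rw [norm_sub_rev]
        _ < R / 2 + R / 4 := by linarith
        _ = 3 * R / 4 := by ring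
    set U : Set (EN N) := ball (0 : EN N) (7 * R / 8) with hUdef
    have hUsub : U ⊆ Ω := fun z hz => hRsub (closedBall_subset_closedBall
      (show 7 * R / 8 ≤ R by linarith) (ball_subset_closedBall hz))
    obtain ⟨hc, h2, hlap, hbd⟩ := hH y hy
    set u : EN N → ℝ := fun z => H z y - γ * (R/8) ^ ((2:ℝ) - N) with hudef
    have hcontu : ContinuousOn u (closure U) := by
      refine ContinuousOn.sub (hc.mono ?_) continuousOn_const
      refine closure_ball_subset_closedBall.trans ?_
      refine subset_trans (closedBall_subset_closedBall (show 7 * R / 8 ≤ R by linarith)) ?_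
      exact hRsub.trans subset_closure
    have hharmu : HarmOn N u U :=
      ((harmOn_of_lap hΩo h2 hlap).mono hUsub).sub (harmOn_const _)
    have hfr : ∀ z ∈ frontier U, u z ≤ 0 := by
      intro z hz
      rw [hUdef, frontier_ball (0 : EN N) (by positivity : (7:ℝ) * R / 8 ≠ 0)] at hz
      have hznorm : ‖z‖ = 7 * R / 8 := by
        have := mem_sphere.mp hz
        rwa [dist_zero_right] at this
      have hzΩ : z ∈ Ω := hRsub (by
        rw [mem_closedBall, dist_zero_right, hznorm]; linarith)
      have hzy : ‖z - y‖ ≥ R / 8 := by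
        calc R / 8 = 7 * R / 8 - 3 * R / 4 := by ring
          _ ≤ ‖z‖ - ‖y‖ := by rw [hznorm]; linarith
          _ ≤ ‖z - y‖ := norm_sub_norm_le z y
      have hzyne : z ≠ y := by
        intro h; rw [h] at hzy; simp at hzy; linarith
      have h1 := green_le hN hΩo hΩb hH y hy z hzΩ hzyne
      have h2 : ‖z - y‖ ^ ((2:ℝ) - N) ≤ (R/8) ^ ((2:ℝ) - N) :=
        rpow_beta_anti hN (by positivity) hzy
      show H z y - γ * (R/8) ^ ((2:ℝ) - N) ≤ 0
      nlinarith
    have hxU : x ∈ U := by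
      rw [hUdef, mem_ball, dist_zero_right]
      linarith
    have hfin := maxp hNpos isOpen_ball isBounded_ball hcontu hharmu hfr x hxU
    have : H x y - γ * (R/8) ^ ((2:ℝ) - N) ≤ 0 := hfin
    linarith

/-- Let `N ≥ 3` and `ε > 0` small. There is a constant `C > 0`,
independent of `ε`, such that for all `x, y ∈ Ω_ε`,
`|H_ε(x,y) − H(x,y) − H_{ε,1}(x,y)| ≤ C ε^{N−2}(|x|^{2−N} + |y|^{2−N})`, where
`H_{ε,1}(x,y) = γ_N ε^{N−2} ||y|(x − ε²y/|y|²)|^{2−N}` is the regular part of the Green's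
function of the exterior domain `ℝ^N ∖ closure B(0,ε)`. -/
theorem stmt_1 (N : ℕ) (hN : 3 ≤ N)
    (Ω : Set (EuclideanSpace ℝ (Fin N))) (hΩo : IsOpen Ω) (hΩb : Bornology.IsBounded Ω)
    (h0 : 0 ∈ Ω)
    (H : EuclideanSpace ℝ (Fin N) → EuclideanSpace ℝ (Fin N) → ℝ)
    (hH : IsRegularPart N Ω H) :
    ∃ ε₀ : ℝ, 0 < ε₀ ∧ ∃ C : ℝ, 0 < C ∧
      ∀ ε : ℝ, 0 < ε → ε < ε₀ →
        ∀ Hε : EuclideanSpace ℝ (Fin N) → EuclideanSpace ℝ (Fin N) → ℝ,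
          IsRegularPart N (Ω \ closedBall 0 ε) Hε →
          ∀ x y : EuclideanSpace ℝ (Fin N),
            x ∈ Ω \ closedBall 0 ε → y ∈ Ω \ closedBall 0 ε →
            |Hε x y - H x y -
                gammaN N * ε ^ ((N : ℝ) - 2) *
                  ‖(‖y‖ : ℝ) • (x - (ε ^ 2 / ‖y‖ ^ 2) • y)‖ ^ ((2 : ℝ) - N)| ≤
              C * ε ^ ((N : ℝ) - 2) * (‖x‖ ^ ((2 : ℝ) - N) + ‖y‖ ^ ((2 : ℝ) - N)) := by
  have hNpos : 0 < N := by omega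
  have hγ : 0 < gammaN N := gammaN_pos hN
  obtain ⟨R₁, hR₁, hballR⟩ := Metric.isOpen_iff.mp hΩo 0 h0
  set R : ℝ := R₁ / 2 with hRdef
  have hR : 0 < R := by positivity
  have hRsub : closedBall (0 : EN N) R ⊆ Ω :=
    (closedBall_subset_ball (by rw [hRdef]; linarith)).trans hballR
  set M : ℝ := gammaN N * (R/4) ^ ((2:ℝ) - N) + gammaN N * (R/8) ^ ((2:ℝ) - N) with hMdef
  have hM0 : 0 ≤ M := by rw [hMdef]; positivity
  set C : ℝ := gammaN N * (R/2) ^ ((2:ℝ) - N) + M + 1 with hCdef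
  have hC : 0 < C := by rw [hCdef]; positivity
  refine ⟨R / 2, by positivity, C, hC, ?_⟩
  intro ε hε hεR Hε hHε x y hx hy
  have hyΩ : y ∈ Ω := hy.1
  have hxΩ : x ∈ Ω := hx.1
  have hynorm : ε < ‖y‖ := by
    have h := hy.2
    simpa [mem_closedBall, dist_zero_right, not_le] using h
  have hy0 : (0:ℝ) < ‖y‖ := lt_trans hε hynorm
  set δ : ℝ := ε ^ ((N:ℝ) - 2) with hδdef
  have hδ : 0 < δ := Real.rpow_pos_of_pos hε _
  have hδε : δ * ε ^ ((2:ℝ) - N) = 1 := by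
    rw [hδdef, ← Real.rpow_add hε, show ((N:ℝ) - 2) + ((2:ℝ) - N) = 0 by ring, Real.rpow_zero]
  set c : EN N := (ε ^ 2 / ‖y‖ ^ 2) • y with hcdef
  have hcnorm : ‖c‖ = ε ^ 2 / ‖y‖ := by
    rw [hcdef, norm_smul, Real.norm_eq_abs, abs_of_nonneg (by positivity)]
    field_simp
  have hclt : ‖c‖ < ε := by
    rw [hcnorm, div_lt_iff₀ hy0]
    nlinarith
  have hsmul : ∀ z : EN N, ‖(‖y‖ : ℝ) • (z - c)‖ ^ ((2:ℝ) - N)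
      = ‖y‖ ^ ((2:ℝ) - N) * ‖z - c‖ ^ ((2:ℝ) - N) := by
    intro z
    rw [norm_smul, Real.norm_eq_abs, abs_norm,
      Real.mul_rpow (norm_nonneg y) (norm_nonneg _)]
  set A : ℝ := gammaN N * δ * ‖y‖ ^ ((2:ℝ) - N) with hAdef
  have hA0 : 0 ≤ A := by rw [hAdef]; positivity
  set u : EN N → ℝ := fun z => Hε z y - H z y - A * ‖z - c‖ ^ ((2:ℝ) - N) with hudef
  set w : EN N → ℝ := fun z =>
    C * δ * ‖z - 0‖ ^ ((2:ℝ) - N) + C * δ * ‖y‖ ^ ((2:ℝ) - N) with hwdef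
  suffices hmain : |u x| ≤ w x by
    have e1 : gammaN N * δ * ‖(‖y‖ : ℝ) • (x - c)‖ ^ ((2:ℝ) - N)
        = A * ‖x - c‖ ^ ((2:ℝ) - N) := by
      rw [hsmul x, hAdef]; ring
    have hux : u x = Hε x y - H x y - A * ‖x - c‖ ^ ((2:ℝ) - N) := by simp only [hudef]
    have hwx : w x = C * δ * (‖x‖ ^ ((2:ℝ) - N) + ‖y‖ ^ ((2:ℝ) - N)) := by
      simp only [hwdef, sub_zero]; ring
    rw [e1, ← hux, ← hwx]
    exact hmain
  -- set up the domain
  set U : Set (EN N) := Ω \ closedBall 0 ε with hUdef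
  have hUopen : IsOpen U := hΩo.sdiff isClosed_closedBall
  have hUbdd : Bornology.IsBounded U := hΩb.subset diff_subset
  have hUx : x ∈ U := hx
  have hUgt : ∀ z ∈ U, ε < ‖z‖ := by
    intro z hz
    have h := hz.2
    simpa [mem_closedBall, dist_zero_right, not_le] using h
  have hUnec : U ⊆ {z : EN N | z ≠ c} := by
    intro z hz hzc
    have h1 := hUgt z hz
    rw [hzc] at h1
    linarith [hclt]
  have hUne0 : U ⊆ {z : EN N | z ≠ 0} := by
    intro z hz
    have h1 := hUgt z hz
    simp only [mem_setOf_eq]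
    intro h0'
    rw [h0'] at h1
    simp at h1
    linarith
  have hclU : closure U ⊆ closure Ω ∩ (ball (0 : EN N) ε)ᶜ := closure_diff_subset Ω 0 ε
  have hclge : ∀ z ∈ closure U, ε ≤ ‖z‖ := by
    intro z hz
    have h2 := (hclU hz).2
    simp only [mem_compl_iff, mem_ball, dist_zero_right, not_lt] at h2
    exact h2
  have hclnec : closure U ⊆ {z : EN N | z ≠ c} := by
    intro z hz hzc
    have h1 := hclge z hz
    rw [hzc] at h1
    linarith [hclt]
  have hclne0 : closure U ⊆ {z : EN N | z ≠ 0} := by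
    intro z hz
    have h1 := hclge z hz
    simp only [mem_setOf_eq]
    intro h0'
    rw [h0'] at h1
    simp at h1
    linarith
  -- continuity
  obtain ⟨hHεcont, hHεsmooth, hHεlap, hHεbd⟩ := hHε y hy
  obtain ⟨hHcont, hHsmooth, hHlap, hHbd⟩ := hH y hyΩ
  have hHεc : ContinuousOn (fun z => Hε z y) (closure U) := hHεcont
  have hHc : ContinuousOn (fun z => H z y) (closure U) :=
    hHcont.mono (fun z hz => (hclU hz).1)
  have hAc : ContinuousOn (fun z => A * ‖z - c‖ ^ ((2:ℝ) - N)) (closure U) :=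
    (continuousOn_const.mul (cont_radial c _)).mono hclnec
  have hwc : ContinuousOn w (closure U) := by
    simp only [hwdef]
    exact ((continuousOn_const.mul (cont_radial 0 _)).mono hclne0).add continuousOn_const
  have huc : ContinuousOn u (closure U) := by
    simp only [hudef]
    exact (hHεc.sub hHc).sub hAc
  -- harmonicity
  have hHεh : HarmOn N (fun z => Hε z y) U := harmOn_of_lap hUopen hHεsmooth hHεlap
  have hHh : HarmOn N (fun z => H z y) U :=
    (harmOn_of_lap hΩo hHsmooth hHlap).mono diff_subset
  have hAh : HarmOn N (fun z => A * ‖z - c‖ ^ ((2:ℝ) - N)) U :=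
    ((harm_radial c).const_mul A).mono hUnec
  have hwh : HarmOn N w U := by
    simp only [hwdef]
    exact (((harm_radial 0).const_mul (C * δ)).mono hUne0).add
      (harmOn_const (C * δ * ‖y‖ ^ ((2:ℝ) - N)))
  have huh : HarmOn N u U := by
    simp only [hudef]
    exact (hHεh.sub hHh).sub hAh
  -- boundary estimate
  have habs : ∀ z ∈ frontier U, |u z| ≤ w z := by
    intro z hz
    have hHεz : Hε z y = gammaN N * ‖z - y‖ ^ ((2:ℝ) - N) := hHεbd z hz
    rcases frontier_diff_subset Ω 0 hε hz with ⟨hz1, _⟩ | hz2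
    · -- on the outer boundary ∂Ω
      have hHz : H z y = gammaN N * ‖z - y‖ ^ ((2:ℝ) - N) := hHbd z hz1
      have huz : u z = -(A * ‖z - c‖ ^ ((2:ℝ) - N)) := by
        simp only [hudef]
        rw [hHεz, hHz]; ring
      have hzno : z ∉ Ω := by
        rw [hΩo.frontier_eq] at hz1
        exact hz1.2
      have hzR : R ≤ ‖z‖ := by
        by_contra hlt
        push_neg at hlt
        exact hzno (hRsub (mem_closedBall_zero_iff.mpr hlt.le))
      have hzc : R / 2 ≤ ‖z - c‖ := by
        have h1 : ‖z‖ - ‖c‖ ≤ ‖z - c‖ := norm_sub_norm_le z c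
        have h2 : ‖c‖ < ε := hclt
        have h3 : ε < R / 2 := hεR
        linarith
      have h1 : ‖z - c‖ ^ ((2:ℝ) - N) ≤ (R/2) ^ ((2:ℝ) - N) :=
        rpow_beta_anti hN (by positivity) hzc
      have hbase0 : 0 ≤ δ * ‖y‖ ^ ((2:ℝ) - N) := by positivity
      have hCγ : gammaN N * (R/2) ^ ((2:ℝ) - N) ≤ C := by
        rw [hCdef]; linarith
      have h2 : A * ‖z - c‖ ^ ((2:ℝ) - N) ≤ C * δ * ‖y‖ ^ ((2:ℝ) - N) := by
        calc A * ‖z - c‖ ^ ((2:ℝ) - N)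
            = (δ * ‖y‖ ^ ((2:ℝ) - N)) * (gammaN N * ‖z - c‖ ^ ((2:ℝ) - N)) := by
              rw [hAdef]; ring
          _ ≤ (δ * ‖y‖ ^ ((2:ℝ) - N)) * (gammaN N * (R/2) ^ ((2:ℝ) - N)) := by
              refine mul_le_mul_of_nonneg_left ?_ hbase0
              exact mul_le_mul_of_nonneg_left h1 hγ.le
          _ ≤ (δ * ‖y‖ ^ ((2:ℝ) - N)) * C := mul_le_mul_of_nonneg_left hCγ hbase0
          _ = C * δ * ‖y‖ ^ ((2:ℝ) - N) := by ring
      have hwge : C * δ * ‖y‖ ^ ((2:ℝ) - N) ≤ w z := by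
        simp only [hwdef]
        have hpos : 0 ≤ C * δ * ‖z - 0‖ ^ ((2:ℝ) - N) := by positivity
        linarith
      rw [huz, abs_neg, abs_of_nonneg (by positivity : (0:ℝ) ≤ A * ‖z - c‖ ^ ((2:ℝ) - N))]
      linarith
    · -- on the inner sphere
      have hznorm : ‖z‖ = ε := by
        have h := mem_sphere.mp hz2
        rwa [dist_zero_right] at h
      have hzΩ : z ∈ Ω := hRsub (by
        rw [mem_closedBall, dist_zero_right, hznorm]; linarith)
      have hsq : (‖y‖ * ‖z - c‖) ^ 2 = (ε * ‖z - y‖) ^ 2 := by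
        have e1 : ‖z - c‖ ^ 2 = ‖z‖ ^ 2 - 2 * ⟪z, c⟫ + ‖c‖ ^ 2 := norm_sub_sq_real z c
        have e2 : ‖z - y‖ ^ 2 = ‖z‖ ^ 2 - 2 * ⟪z, y⟫ + ‖y‖ ^ 2 := norm_sub_sq_real z y
        have e3 : ⟪z, c⟫ = (ε ^ 2 / ‖y‖ ^ 2) * ⟪z, y⟫ := by
          rw [hcdef, real_inner_smul_right]
        have e4 : ‖c‖ ^ 2 = ε ^ 4 / ‖y‖ ^ 2 := by
          rw [hcnorm]
          field_simp
        rw [mul_pow, mul_pow, e1, e2, e3, e4, hznorm]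
        field_simp
        ring
      have hkel : ‖y‖ * ‖z - c‖ = ε * ‖z - y‖ := by
        have hn1 : 0 ≤ ‖y‖ * ‖z - c‖ := by positivity
        have hn2 : 0 ≤ ε * ‖z - y‖ := by positivity
        rw [← Real.sqrt_sq hn1, ← Real.sqrt_sq hn2, hsq]
      have hAz : A * ‖z - c‖ ^ ((2:ℝ) - N) = gammaN N * ‖z - y‖ ^ ((2:ℝ) - N) := by
        have h1 : ‖y‖ ^ ((2:ℝ) - N) * ‖z - c‖ ^ ((2:ℝ) - N)
            = (‖y‖ * ‖z - c‖) ^ ((2:ℝ) - N) :=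
          (Real.mul_rpow (norm_nonneg y) (norm_nonneg _)).symm
        have h2 : (ε * ‖z - y‖) ^ ((2:ℝ) - N) = ε ^ ((2:ℝ) - N) * ‖z - y‖ ^ ((2:ℝ) - N) :=
          Real.mul_rpow hε.le (norm_nonneg _)
        calc A * ‖z - c‖ ^ ((2:ℝ) - N)
            = gammaN N * δ * (‖y‖ ^ ((2:ℝ) - N) * ‖z - c‖ ^ ((2:ℝ) - N)) := by
              rw [hAdef]; ring
          _ = gammaN N * δ * ((ε * ‖z - y‖) ^ ((2:ℝ) - N)) := by rw [h1, hkel]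
          _ = gammaN N * (δ * ε ^ ((2:ℝ) - N)) * ‖z - y‖ ^ ((2:ℝ) - N) := by
              rw [h2]; ring
          _ = gammaN N * ‖z - y‖ ^ ((2:ℝ) - N) := by rw [hδε]; ring
      have huz : u z = -(H z y) := by
        simp only [hudef]
        rw [hHεz, hAz]; ring
      have hH0 : 0 ≤ H z y := green_nonneg hN hΩo hΩb hH y hyΩ z hzΩ
      have hHM : H z y ≤ M := by
        have h := green_near hN hΩo hΩb hH hR hRsub y hyΩ z hzΩ (by
          rw [hznorm]; linarith)
        rw [← hMdef] at h
        exact h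
      have hwz : C ≤ w z := by
        simp only [hwdef]
        have h1 : ‖z - (0 : EN N)‖ = ε := by rw [sub_zero, hznorm]
        rw [h1]
        have hpos : 0 ≤ C * δ * ‖y‖ ^ ((2:ℝ) - N) := by positivity
        have h2 : C * δ * ε ^ ((2:ℝ) - N) = C := by
          rw [mul_assoc, hδε, mul_one]
        linarith
      have hMC : M ≤ C := by
        rw [hCdef]
        have : 0 ≤ gammaN N * (R/2) ^ ((2:ℝ) - N) := by positivity
        linarith
      rw [huz, abs_neg, abs_of_nonneg hH0]
      linarith
  -- apply the maximum principle to ±u − w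
  have h1 : u x - w x ≤ 0 := by
    refine maxp hNpos hUopen hUbdd (huc.sub hwc) (huh.sub hwh) ?_ x hUx
    intro z hz
    have h := habs z hz
    have h' : u z ≤ w z := (abs_le.mp h).2
    show u z - w z ≤ 0
    linarith
  have h2 : -u x - w x ≤ 0 := by
    refine maxp hNpos hUopen hUbdd ((huc.neg).sub hwc) ((huh.neg).sub hwh) ?_ x hUx
    intro z hz
    have h := habs z hz
    have h' : -(u z) ≤ w z := neg_le.mp (abs_le.mp h).1
    show -u z - w z ≤ 0
    linarith
  rw [abs_le]
  constructor <;> linarith
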